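/- Let C be a category and let X be an object of C such that for every n ≥ 1 the n-fold power Xⁿ (the product of n copies of X) exists in C, and such that every object Y of C admits at least one morphism Y → X. Let X^{•+1} : Δᵒᵖ ⥤ C denote the simplicial object whose value on [n] is the (n+1)-fold power X^{n+1} = ∏_{i ∈ Fin (n+1)} X, and whose structure map associated to a morphism α : [m] → [n] of Δ is the morphism X^{n+1} → X^{m+1} whose i-th component is the projection onto the α(i)-th factor (this is the Čech nerve of the map from X to the terminal object, when a terminal object exists). Then the functor X^{•+1} : Δᵒᵖ ⥤ C is final, i.e., for every functor out of C, restricting a colimit diagram along X^{•+1} preserves the colimit (in Mathlib: CategoryTheory.Functor.Final holds for this functor). -/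

import Mathlib

open CategoryTheory CategoryTheory.Limits

universe v u

variable {C : Type u} [Category.{v} C]

/-- The simplicial object `X^{•+1} : Δᵒᵖ ⥤ C` attached to an object `X` whose
finite powers exist: it sends `[n]` to the `(n+1)`-fold power `∏ X` and a
morphism `α : [m] ⟶ [n]` of the simplex category to the morphism
`X^{n+1} ⟶ X^{m+1}` whose `i`-th component is the projection onto the
`α i`-th factor.  (This is the Čech nerve of the map from `X` to the terminal
object, when a terminal object exists.) -/
@[simps]
noncomputable def cechPower (X : C) [∀ n : ℕ, HasProduct (fun _ : Fin (n + 1) => X)] :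
    SimplexCategoryᵒᵖ ⥤ C where
  obj n := ∏ᶜ (fun _ : Fin (n.unop.len + 1) => X)
  map {n m} α :=
    Pi.lift (fun i : Fin (m.unop.len + 1) =>
      Pi.π (fun _ : Fin (n.unop.len + 1) => X) (α.unop.toOrderHom i))
  map_id n := by
    ext i
    simp
  map_comp {n m k} α β := by
    ext i
    simp

lemma eqToHom_toOrderHom_val {a b : SimplexCategory} (e : a = b) (i : Fin (a.len + 1)) :
    (((eqToHom e : a ⟶ b)).toOrderHom i : ℕ) = (i : ℕ) := by
  subst e; rfl

/-- **Proposition `cofinal` (Section 5.5).**  Let `X : C` be an object such that all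
the finite powers `Xⁿ` (`n ≥ 1`) exist in `C` and such that every object `Y` of `C`
admits a morphism `Y ⟶ X`.  Then the simplicial object `X^{•+1} : Δᵒᵖ ⥤ C` is a
final functor. -/
theorem cechPower_final (X : C) [∀ n : ℕ, HasProduct (fun _ : Fin (n + 1) => X)]
    (h : ∀ Y : C, Nonempty (Y ⟶ X)) :
    (cechPower X).Final := by
  constructor
  intro Y
  obtain ⟨g⟩ := h Y
  have : Nonempty (StructuredArrow Y (cechPower X)) :=
    ⟨StructuredArrow.mk (Y := Opposite.op (SimplexCategory.mk 0))
      (Pi.lift (fun _ => g))⟩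
  apply zigzag_isConnected
  intro j₁ j₂
  set n := j₁.right.unop.len with hn
  set m := j₂.right.unop.len with hm
  -- the combined object over [n + m + 1]
  let c : Fin (n + m + 1 + 1) → (Y ⟶ X) := fun i =>
    if hi : (i : ℕ) < n + 1 then
      j₁.hom ≫ Pi.π (fun _ : Fin (n + 1) => X) ⟨i, hi⟩
    else
      j₂.hom ≫ Pi.π (fun _ : Fin (m + 1) => X) ⟨(i : ℕ) - (n + 1), by omega⟩
  let k : StructuredArrow Y (cechPower X) :=
    StructuredArrow.mk (Y := Opposite.op (SimplexCategory.mk (n + m + 1)))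
      (Pi.lift c)
  -- morphism k ⟶ j₁
  let α : j₁.right.unop ⟶ SimplexCategory.mk (n + m + 1) :=
    SimplexCategory.Hom.mk
      ⟨fun i => ⟨(i : ℕ), show (i : ℕ) < n + m + 1 + 1 by omega⟩,
        fun a b hab => hab⟩
  have f₁ : k ⟶ j₁ := by
    refine StructuredArrow.homMk α.op ?_
    dsimp [k]
    refine Pi.hom_ext (f := fun _ : Fin (n + 1) => X) _ _ (fun i => ?_)
    change (Pi.lift c ≫ (Pi.lift (fun i : Fin (n + 1) => Pi.π (fun _ : Fin (n + m + 1 + 1) => X) (α.toOrderHom i)) : (∏ᶜ fun _ : Fin (n + m + 1 + 1) => X) ⟶ ∏ᶜ fun _ : Fin (n + 1) => X)) ≫ Pi.π _ i = _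
    simp only [cechPower_map, Category.assoc, limit.lift_π, Fan.mk_π_app]
    show (if hi : (i : ℕ) < n + 1 then
        j₁.hom ≫ Pi.π (fun _ : Fin (n + 1) => X) ⟨i, hi⟩
      else
        j₂.hom ≫ Pi.π (fun _ : Fin (m + 1) => X) ⟨(i : ℕ) - (n + 1), by omega⟩)
      = j₁.hom ≫ Pi.π (fun _ : Fin (n + 1) => X) ⟨(i : ℕ), by omega⟩
    rw [dif_pos (show (i : ℕ) < n + 1 by omega)]
  -- morphism k ⟶ j₂
  let β : j₂.right.unop ⟶ SimplexCategory.mk (n + m + 1) :=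
    SimplexCategory.Hom.mk
      ⟨fun i => ⟨n + 1 + (i : ℕ), show n + 1 + (i : ℕ) < n + m + 1 + 1 by omega⟩,
        fun a b hab => by
          simp only [Fin.mk_le_mk]
          exact Nat.add_le_add_left hab _⟩
  have f₂ : k ⟶ j₂ := by
    refine StructuredArrow.homMk β.op ?_
    dsimp [k]
    refine Pi.hom_ext (f := fun _ : Fin (m + 1) => X) _ _ (fun i => ?_)
    change (Pi.lift c ≫ (Pi.lift (fun i : Fin (m + 1) => Pi.π (fun _ : Fin (n + m + 1 + 1) => X) (β.toOrderHom i)) : (∏ᶜ fun _ : Fin (n + m + 1 + 1) => X) ⟶ ∏ᶜ fun _ : Fin (m + 1) => X)) ≫ Pi.π _ i = _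
    simp only [cechPower_map, Category.assoc, limit.lift_π, Fan.mk_π_app]
    show (if hi : n + 1 + (i : ℕ) < n + 1 then
        j₁.hom ≫ Pi.π (fun _ : Fin (n + 1) => X) ⟨n + 1 + (i : ℕ), hi⟩
      else
        j₂.hom ≫ Pi.π (fun _ : Fin (m + 1) => X) ⟨n + 1 + (i : ℕ) - (n + 1), by omega⟩)
      = j₂.hom ≫ Pi.π (fun _ : Fin (m + 1) => X) ⟨(i : ℕ), by omega⟩
    rw [dif_neg (show ¬ (n + 1 + (i : ℕ) < n + 1) by omega)]
    congr 1
    exact congrArg (Pi.π (fun _ : Fin (m + 1) => X))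
      (Fin.ext (show n + 1 + (i : ℕ) - (n + 1) = (i : ℕ) by omega))
  exact Relation.ReflTransGen.trans
    (Relation.ReflTransGen.single (Or.inr ⟨f₁⟩))
    (Relation.ReflTransGen.single (Or.inl ⟨f₂⟩))
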